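/- Tree policy gradient theorem (finite case): In a finite tree MDP with finite state space S and finite action space A, let π_θ(a|s) > 0 be a policy differentiable in a real parameter θ, and let p_θ(τ) = p_init(s_0) · ∏_{i ∈ N∖L} π_θ(a_i|s_i) p⁻(s_{ch⁻(i)}|s_i,a_i) p⁺(s_{ch⁺(i)}|s_i,a_i) be the induced distribution over finite tree-structured trajectories τ. Then the derivative with respect to θ of the expected total reward V^θ = E_{τ∼p_θ}[∑_{i∈N} r(s_i)] equals E_{τ∼p_θ}[∑_{i∈N∖L} (d/dθ log π_θ(a_i|s_i)) · ∑_{j∈d(i)} r(s_j)], where d(i) is the set of descendants of node i (including i). -/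

import Mathlib

/-- Finite binary tree trajectories of a tree MDP: every node carries a state,
every non-leaf node also carries an action. -/
inductive BT (S A : Type) : Type
  | leaf (s : S)
  | node (s : S) (a : A) (l r : BT S A)
deriving DecidableEq

namespace BT

variable {S A : Type}

/-- State at the root of the trajectory. -/
def root : BT S A → S
  | leaf s => s
  | node s _ _ _ => s

/-- Number of nodes. -/
def size : BT S A → ℕ
  | leaf _ => 1
  | node _ _ l r => size l + size r + 1

/-- Total reward collected over all nodes of the trajectory. -/
def reward (r : S → ℝ) : BT S A → ℝ
  | leaf s => r s
  | node s _ l ri => r s + reward r l + reward r ri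

/-- Probability of generating a given trajectory starting from its root state:
the product, over non-leaf nodes `i`, of `π(a_i|s_i) p⁻(s_{ch⁻(i)}|s_i,a_i)
p⁺(s_{ch⁺(i)}|s_i,a_i)`, together with the leaf-indicator consistency
conditions given by `lf`. -/
def prob (lf : S → Bool) (π : S → A → ℝ) (pm pp : S → A → S → ℝ) : BT S A → ℝ
  | leaf s => if lf s then 1 else 0
  | node s a l ri =>
      (if lf s then 0 else 1) * π s a * pm s a (root l) * pp s a (root ri)
        * prob lf π pm pp l * prob lf π pm pp ri

end BT

/-- The (finite) set of all trajectories of depth at most `n`. -/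
def treesUpTo (S A : Type) [Fintype S] [Fintype A] [DecidableEq S] [DecidableEq A] :
    ℕ → Finset (BT S A)
  | 0 => Finset.univ.image BT.leaf
  | n + 1 =>
      Finset.univ.image BT.leaf ∪
        ((Finset.univ ×ˢ Finset.univ ×ˢ treesUpTo S A n ×ˢ treesUpTo S A n).image
          (fun x : S × A × BT S A × BT S A => BT.node x.1 x.2.1 x.2.2.1 x.2.2.2))

namespace BT

/-- Tree policy-gradient integrand: the sum, over the non-leaf nodes `i` of the
trajectory, of `(d/dθ log π_θ(a_i|s_i))` times the total reward
`∑_{j ∈ d(i)} r(s_j)` of the subtree rooted at `i` (descendants including `i`). -/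
noncomputable def gradTerm {S A : Type} (r : S → ℝ) (π : ℝ → S → A → ℝ) (θ : ℝ) :
    BT S A → ℝ
  | leaf _ => 0
  | node s a l ri =>
      deriv (fun u => Real.log (π u s a)) θ * reward r (node s a l ri)
        + gradTerm r π θ l + gradTerm r π θ ri

end BT

section Aux
variable {S A : Type} [Fintype S] [Fintype A] [DecidableEq S] [DecidableEq A]

lemma sum_treesUpTo_zero (s : S) (F : BT S A → ℝ) :
    ∑ τ ∈ (treesUpTo S A 0).filter (fun τ => BT.root τ = s), F τ = F (BT.leaf s) := by
  rw [Finset.sum_filter, show treesUpTo S A 0 = Finset.univ.image BT.leaf from rfl,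
    Finset.sum_image (by intro a _ b _ h; injection h)]
  simp [BT.root]
  rw [Finset.sum_eq_single s] <;> simp_all

lemma sum_treesUpTo_succ (n : ℕ) (s : S) (F : BT S A → ℝ) :
    ∑ τ ∈ (treesUpTo S A (n+1)).filter (fun τ => BT.root τ = s), F τ
      = F (BT.leaf s) + ∑ a : A, ∑ l ∈ treesUpTo S A n, ∑ ri ∈ treesUpTo S A n,
          F (BT.node s a l ri) := by
  have hdisj : Disjoint (Finset.univ.image (BT.leaf : S → BT S A))
      ((Finset.univ ×ˢ Finset.univ ×ˢ treesUpTo S A n ×ˢ treesUpTo S A n).image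
        (fun x : S × A × BT S A × BT S A => BT.node x.1 x.2.1 x.2.2.1 x.2.2.2)) := by
    simp only [Finset.disjoint_left, Finset.mem_image]
    rintro τ ⟨s', _, rfl⟩ ⟨x, _, h⟩
    exact absurd h (by simp)
  rw [Finset.sum_filter, show treesUpTo S A (n+1) = _ ∪ _ from rfl, Finset.sum_union hdisj,
    Finset.sum_image (by intro a _ b _ h; injection h),
    Finset.sum_image (by
      intro x _ y _ h
      injection h with h1 h2 h3 h4
      exact Prod.ext h1 (Prod.ext h2 (Prod.ext h3 h4)))]
  rw [Finset.sum_product, Finset.sum_comm]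
  simp only [Finset.sum_product, BT.root]
  congr 1
  · rw [Finset.sum_eq_single s] <;> simp_all
  · refine Finset.sum_congr rfl fun a _ => Finset.sum_congr rfl fun l _ =>
      Finset.sum_congr rfl fun ri _ => ?_
    rw [Finset.sum_eq_single s] <;> simp_all

lemma sum_fiber_root (n : ℕ) (g : S → ℝ) (F : BT S A → ℝ) :
    ∑ l ∈ treesUpTo S A n, g (BT.root l) * F l
      = ∑ s' : S, g s' * ∑ l ∈ (treesUpTo S A n).filter (fun τ => BT.root τ = s'), F l := by
  rw [← Finset.sum_fiberwise_of_maps_to (g := BT.root) (t := Finset.univ)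
    (fun x _ => Finset.mem_univ _)]
  refine Finset.sum_congr rfl fun s' _ => ?_
  rw [Finset.mul_sum]
  refine Finset.sum_congr rfl fun l hl => ?_
  rw [(Finset.mem_filter.mp hl).2]

variable (lf : S → Bool) (pm pp : S → A → S → ℝ) (π : ℝ → S → A → ℝ) (r : S → ℝ)

noncomputable def Mf (n : ℕ) (θ : ℝ) (s : S) : ℝ :=
  ∑ τ ∈ (treesUpTo S A n).filter (fun τ => BT.root τ = s), BT.prob lf (π θ) pm pp τ

noncomputable def Wf (n : ℕ) (θ : ℝ) (s : S) : ℝ :=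
  ∑ τ ∈ (treesUpTo S A n).filter (fun τ => BT.root τ = s),
    BT.prob lf (π θ) pm pp τ * BT.reward r τ

lemma Mf_zero (θ : ℝ) (s : S) :
    Mf lf pm pp π 0 θ s = if lf s then 1 else 0 := by
  rw [Mf, sum_treesUpTo_zero]; rfl

lemma Mf_succ (n : ℕ) (θ : ℝ) (s : S) :
    Mf lf pm pp π (n+1) θ s
      = (if lf s then (1:ℝ) else 0) + (if lf s then (0:ℝ) else 1) *
          ∑ a : A, π θ s a *
            ((∑ s' : S, pm s a s' * Mf lf pm pp π n θ s')
              * (∑ s'' : S, pp s a s'' * Mf lf pm pp π n θ s'')) := by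
  rw [Mf, sum_treesUpTo_succ]
  congr 1
  rw [Finset.mul_sum]
  refine Finset.sum_congr rfl fun a _ => ?_
  have : ∀ l ri : BT S A, BT.prob lf (π θ) pm pp (BT.node s a l ri)
      = ((if lf s then (0:ℝ) else 1) * π θ s a) *
        ((pm s a (BT.root l) * BT.prob lf (π θ) pm pp l)
          * (pp s a (BT.root ri) * BT.prob lf (π θ) pm pp ri)) := by
    intro l ri; rw [BT.prob]; ring
  simp only [this, ← Finset.mul_sum, ← Finset.sum_mul]
  rw [sum_fiber_root, sum_fiber_root]
  simp only [Mf]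
  ring

noncomputable def Gf (n : ℕ) (θ : ℝ) (s : S) : ℝ :=
  ∑ τ ∈ (treesUpTo S A n).filter (fun τ => BT.root τ = s),
    BT.prob lf (π θ) pm pp τ * BT.gradTerm r π θ τ

lemma Wf_zero (θ : ℝ) (s : S) :
    Wf lf pm pp π r 0 θ s = (if lf s then (1:ℝ) else 0) * r s := by
  rw [Wf, sum_treesUpTo_zero]; rfl

lemma Gf_zero (θ : ℝ) (s : S) : Gf lf pm pp π r 0 θ s = 0 := by
  rw [Gf, sum_treesUpTo_zero]
  show BT.prob lf (π θ) pm pp (BT.leaf s) * 0 = 0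
  ring

lemma Wf_succ (n : ℕ) (θ : ℝ) (s : S) :
    Wf lf pm pp π r (n+1) θ s
      = (if lf s then (1:ℝ) else 0) * r s + (if lf s then (0:ℝ) else 1) *
          ∑ a : A, π θ s a *
            (r s * ((∑ s' : S, pm s a s' * Mf lf pm pp π n θ s')
                * (∑ s'' : S, pp s a s'' * Mf lf pm pp π n θ s''))
              + (∑ s' : S, pm s a s' * Wf lf pm pp π r n θ s')
                * (∑ s'' : S, pp s a s'' * Mf lf pm pp π n θ s'')
              + (∑ s' : S, pm s a s' * Mf lf pm pp π n θ s')
                * (∑ s'' : S, pp s a s'' * Wf lf pm pp π r n θ s'')) := by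
  rw [Wf, sum_treesUpTo_succ]
  congr 1
  rw [Finset.mul_sum]
  refine Finset.sum_congr rfl fun a _ => ?_
  have : ∀ l ri : BT S A,
      BT.prob lf (π θ) pm pp (BT.node s a l ri) * BT.reward r (BT.node s a l ri)
      = ((if lf s then (0:ℝ) else 1) * π θ s a) * (r s *
          ((pm s a (BT.root l) * BT.prob lf (π θ) pm pp l)
            * (pp s a (BT.root ri) * BT.prob lf (π θ) pm pp ri)))
        + ((if lf s then (0:ℝ) else 1) * π θ s a) *
          ((pm s a (BT.root l) * (BT.prob lf (π θ) pm pp l * BT.reward r l))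
            * (pp s a (BT.root ri) * BT.prob lf (π θ) pm pp ri))
        + ((if lf s then (0:ℝ) else 1) * π θ s a) *
          ((pm s a (BT.root l) * BT.prob lf (π θ) pm pp l)
            * (pp s a (BT.root ri) * (BT.prob lf (π θ) pm pp ri * BT.reward r ri))) := by
    intro l ri; rw [BT.prob, BT.reward]; ring
  simp only [this, Finset.sum_add_distrib, ← Finset.mul_sum, ← Finset.sum_mul]
  rw [sum_fiber_root, sum_fiber_root, sum_fiber_root, sum_fiber_root]
  simp only [Mf, Wf]
  ring

lemma Gf_succ (n : ℕ) (θ : ℝ) (s : S) :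
    Gf lf pm pp π r (n+1) θ s
      = (if lf s then (0:ℝ) else 1) *
          ∑ a : A, π θ s a *
            (deriv (fun u => Real.log (π u s a)) θ *
              (r s * ((∑ s' : S, pm s a s' * Mf lf pm pp π n θ s')
                  * (∑ s'' : S, pp s a s'' * Mf lf pm pp π n θ s''))
                + (∑ s' : S, pm s a s' * Wf lf pm pp π r n θ s')
                  * (∑ s'' : S, pp s a s'' * Mf lf pm pp π n θ s'')
                + (∑ s' : S, pm s a s' * Mf lf pm pp π n θ s')
                  * (∑ s'' : S, pp s a s'' * Wf lf pm pp π r n θ s''))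
              + (∑ s' : S, pm s a s' * Gf lf pm pp π r n θ s')
                * (∑ s'' : S, pp s a s'' * Mf lf pm pp π n θ s'')
              + (∑ s' : S, pm s a s' * Mf lf pm pp π n θ s')
                * (∑ s'' : S, pp s a s'' * Gf lf pm pp π r n θ s'')) := by
  rw [Gf, sum_treesUpTo_succ]
  have hleaf : BT.prob lf (π θ) pm pp (BT.leaf s) * BT.gradTerm r π θ (BT.leaf s)
      = 0 := by
    show BT.prob lf (π θ) pm pp (BT.leaf s) * 0 = 0; ring
  rw [hleaf, zero_add, Finset.mul_sum]
  refine Finset.sum_congr rfl fun a _ => ?_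
  have : ∀ l ri : BT S A,
      BT.prob lf (π θ) pm pp (BT.node s a l ri) * BT.gradTerm r π θ (BT.node s a l ri)
      = ((if lf s then (0:ℝ) else 1) * π θ s a) *
          (deriv (fun u => Real.log (π u s a)) θ * r s *
          ((pm s a (BT.root l) * BT.prob lf (π θ) pm pp l)
            * (pp s a (BT.root ri) * BT.prob lf (π θ) pm pp ri)))
        + ((if lf s then (0:ℝ) else 1) * π θ s a) *
          (deriv (fun u => Real.log (π u s a)) θ *
          ((pm s a (BT.root l) * (BT.prob lf (π θ) pm pp l * BT.reward r l))
            * (pp s a (BT.root ri) * BT.prob lf (π θ) pm pp ri)))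
        + ((if lf s then (0:ℝ) else 1) * π θ s a) *
          (deriv (fun u => Real.log (π u s a)) θ *
          ((pm s a (BT.root l) * BT.prob lf (π θ) pm pp l)
            * (pp s a (BT.root ri) * (BT.prob lf (π θ) pm pp ri * BT.reward r ri))))
        + ((if lf s then (0:ℝ) else 1) * π θ s a) *
          ((pm s a (BT.root l) * (BT.prob lf (π θ) pm pp l * BT.gradTerm r π θ l))
            * (pp s a (BT.root ri) * BT.prob lf (π θ) pm pp ri))
        + ((if lf s then (0:ℝ) else 1) * π θ s a) *
          ((pm s a (BT.root l) * BT.prob lf (π θ) pm pp l)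
            * (pp s a (BT.root ri) * (BT.prob lf (π θ) pm pp ri * BT.gradTerm r π θ ri))) := by
    intro l ri; rw [BT.prob, BT.gradTerm, BT.reward]; ring
  simp only [this, Finset.sum_add_distrib, ← Finset.mul_sum, ← Finset.sum_mul]
  rw [sum_fiber_root, sum_fiber_root, sum_fiber_root, sum_fiber_root, sum_fiber_root,
    sum_fiber_root]
  simp only [Mf, Wf, Gf]
  ring

lemma prob_nonneg (π₀ : S → A → ℝ) (hπ : ∀ s a, 0 ≤ π₀ s a)
    (hpm0 : ∀ s a s', 0 ≤ pm s a s') (hpp0 : ∀ s a s', 0 ≤ pp s a s') :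
    ∀ τ : BT S A, 0 ≤ BT.prob lf π₀ pm pp τ
  | BT.leaf s => by rw [BT.prob]; split_ifs <;> norm_num
  | BT.node s a l ri => by
      rw [BT.prob]
      have hl := prob_nonneg π₀ hπ hpm0 hpp0 l
      have hr := prob_nonneg π₀ hπ hpm0 hpp0 ri
      have h1 : (0:ℝ) ≤ if lf s then 0 else 1 := by split_ifs <;> norm_num
      exact mul_nonneg (mul_nonneg (mul_nonneg (mul_nonneg (mul_nonneg h1 (hπ s a))
        (hpm0 _ _ _)) (hpp0 _ _ _)) hl) hr

lemma Mf_nonneg (θ : ℝ) (hπ : ∀ s a, 0 ≤ π θ s a)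
    (hpm0 : ∀ s a s', 0 ≤ pm s a s') (hpp0 : ∀ s a s', 0 ≤ pp s a s')
    (n : ℕ) (s : S) : 0 ≤ Mf lf pm pp π n θ s :=
  Finset.sum_nonneg fun τ _ => prob_nonneg lf pm pp (π θ) hπ hpm0 hpp0 τ

lemma Mf_le_one (θ : ℝ) (hπ : ∀ s a, 0 ≤ π θ s a) (hπsum : ∀ s, ∑ a : A, π θ s a = 1)
    (hpm0 : ∀ s a s', 0 ≤ pm s a s') (hpm1 : ∀ s a, ∑ s' : S, pm s a s' = 1)
    (hpp0 : ∀ s a s', 0 ≤ pp s a s') (hpp1 : ∀ s a, ∑ s' : S, pp s a s' = 1) :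
    ∀ (n : ℕ) (s : S), Mf lf pm pp π n θ s ≤ 1 := by
  intro n
  induction n with
  | zero => intro s; rw [Mf_zero]; split_ifs <;> norm_num
  | succ n ih =>
    intro s
    rw [Mf_succ]
    have hSm : ∀ a, (∑ s' : S, pm s a s' * Mf lf pm pp π n θ s') ≤ 1 := fun a => by
      calc (∑ s' : S, pm s a s' * Mf lf pm pp π n θ s') ≤ ∑ s' : S, pm s a s' :=
            Finset.sum_le_sum fun s' _ => by
              have := ih s'
              have h0 := hpm0 s a s'
              nlinarith [Mf_nonneg lf pm pp π θ hπ hpm0 hpp0 n s']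
        _ = 1 := hpm1 s a
    have hSp : ∀ a, (∑ s'' : S, pp s a s'' * Mf lf pm pp π n θ s'') ≤ 1 := fun a => by
      calc (∑ s'' : S, pp s a s'' * Mf lf pm pp π n θ s'') ≤ ∑ s'' : S, pp s a s'' :=
            Finset.sum_le_sum fun s' _ => by
              have := ih s'
              have h0 := hpp0 s a s'
              nlinarith [Mf_nonneg lf pm pp π θ hπ hpm0 hpp0 n s']
        _ = 1 := hpp1 s a
    have hSm0 : ∀ a, 0 ≤ (∑ s' : S, pm s a s' * Mf lf pm pp π n θ s') := fun a =>
      Finset.sum_nonneg fun s' _ =>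
        mul_nonneg (hpm0 s a s') (Mf_nonneg lf pm pp π θ hπ hpm0 hpp0 n s')
    have hSp0 : ∀ a, 0 ≤ (∑ s'' : S, pp s a s'' * Mf lf pm pp π n θ s'') := fun a =>
      Finset.sum_nonneg fun s' _ =>
        mul_nonneg (hpp0 s a s') (Mf_nonneg lf pm pp π θ hπ hpm0 hpp0 n s')
    split_ifs with h
    · norm_num
    · calc (0:ℝ) + 1 * ∑ a : A, π θ s a *
            ((∑ s' : S, pm s a s' * Mf lf pm pp π n θ s')
              * (∑ s'' : S, pp s a s'' * Mf lf pm pp π n θ s''))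
          ≤ 0 + 1 * ∑ a : A, π θ s a * 1 := by
            have : ∀ a ∈ (Finset.univ : Finset A), π θ s a *
                ((∑ s' : S, pm s a s' * Mf lf pm pp π n θ s')
                  * (∑ s'' : S, pp s a s'' * Mf lf pm pp π n θ s'')) ≤ π θ s a * 1 :=
              fun a _ => by
                have hprod : (∑ s' : S, pm s a s' * Mf lf pm pp π n θ s')
                    * (∑ s'' : S, pp s a s'' * Mf lf pm pp π n θ s'') ≤ 1 := by
                  nlinarith [hSm a, hSp a, hSm0 a, hSp0 a]
                exact mul_le_mul_of_nonneg_left hprod (hπ s a)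
            have := Finset.sum_le_sum this
            linarith
      _ = 1 := by rw [zero_add, one_mul]; simp [hπsum s]

lemma child_mass (θ : ℝ)
    (hπpos : ∀ s a, 0 < π θ s a) (hπsum : ∀ s, ∑ a : A, π θ s a = 1)
    (hpm0 : ∀ s a s', 0 ≤ pm s a s') (hpm1 : ∀ s a, ∑ s' : S, pm s a s' = 1)
    (hpp0 : ∀ s a s', 0 ≤ pp s a s') (hpp1 : ∀ s a, ∑ s' : S, pp s a s' = 1)
    (n : ℕ) (s : S) (hs : ¬ lf s = true) (h : Mf lf pm pp π (n+1) θ s = 1) :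
    ∀ a : A, (∀ s', 0 < pm s a s' → Mf lf pm pp π n θ s' = 1)
      ∧ (∀ s'', 0 < pp s a s'' → Mf lf pm pp π n θ s'' = 1) := by
  have hπ : ∀ s a, 0 ≤ π θ s a := fun s a => le_of_lt (hπpos s a)
  have hM0 := Mf_nonneg lf pm pp π θ hπ hpm0 hpp0 n
  have hM1 := Mf_le_one lf pm pp π θ hπ (hπsum) hpm0 hpm1 hpp0 hpp1 n
  set Sm : A → ℝ := fun a => ∑ s' : S, pm s a s' * Mf lf pm pp π n θ s' with hSmdef
  set Sp : A → ℝ := fun a => ∑ s'' : S, pp s a s'' * Mf lf pm pp π n θ s'' with hSpdef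
  have hSm0 : ∀ a, 0 ≤ Sm a := fun a =>
    Finset.sum_nonneg fun s' _ => mul_nonneg (hpm0 s a s') (hM0 s')
  have hSp0 : ∀ a, 0 ≤ Sp a := fun a =>
    Finset.sum_nonneg fun s' _ => mul_nonneg (hpp0 s a s') (hM0 s')
  have hSm1 : ∀ a, Sm a ≤ 1 := fun a => by
    calc Sm a ≤ ∑ s' : S, pm s a s' := Finset.sum_le_sum fun s' _ => by
          nlinarith [hM0 s', hM1 s', hpm0 s a s']
      _ = 1 := hpm1 s a
  have hSp1 : ∀ a, Sp a ≤ 1 := fun a => by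
    calc Sp a ≤ ∑ s' : S, pp s a s' := Finset.sum_le_sum fun s' _ => by
          nlinarith [hM0 s', hM1 s', hpp0 s a s']
      _ = 1 := hpp1 s a
  rw [Mf_succ] at h
  rw [if_neg hs, if_neg hs] at h
  rw [zero_add, one_mul] at h
  have hsum0 : ∑ a : A, π θ s a * (1 - Sm a * Sp a) = 0 := by
    have hexp : ∑ a : A, π θ s a * (1 - Sm a * Sp a)
        = ∑ a : A, π θ s a - ∑ a : A, π θ s a * (Sm a * Sp a) := by
      rw [← Finset.sum_sub_distrib]
      exact Finset.sum_congr rfl fun a _ => by ring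
    rw [hexp, hπsum s, h]
    ring
  have hkey : ∀ a ∈ (Finset.univ : Finset A), π θ s a * (1 - Sm a * Sp a) = 0 :=
    (Finset.sum_eq_zero_iff_of_nonneg fun a _ => mul_nonneg (hπ s a)
      (by nlinarith [hSm0 a, hSp0 a, hSm1 a, hSp1 a])).mp hsum0
  intro a
  have hprod : Sm a * Sp a = 1 := by
    have := hkey a (Finset.mem_univ a)
    have hne := ne_of_gt (hπpos s a)
    have : 1 - Sm a * Sp a = 0 := by
      rcases mul_eq_zero.mp this with h' | h'
      · exact absurd h' hne
      · exact h'
    linarith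
  have hSmeq : Sm a = 1 := by nlinarith [hSm0 a, hSp0 a, hSm1 a, hSp1 a]
  have hSpeq : Sp a = 1 := by nlinarith [hSm0 a, hSp0 a, hSm1 a, hSp1 a]
  constructor
  · intro s' hpm
    have hz : ∑ s' : S, pm s a s' * (1 - Mf lf pm pp π n θ s') = 0 := by
      have hexp : ∑ s' : S, pm s a s' * (1 - Mf lf pm pp π n θ s')
          = ∑ s' : S, pm s a s' - Sm a := by
        rw [hSmdef, ← Finset.sum_sub_distrib]
        exact Finset.sum_congr rfl fun x _ => by ring
      rw [hexp, hpm1 s a, hSmeq]; ring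
    have := (Finset.sum_eq_zero_iff_of_nonneg fun x _ =>
      mul_nonneg (hpm0 s a x) (by nlinarith [hM0 x, hM1 x])).mp hz s' (Finset.mem_univ s')
    rcases mul_eq_zero.mp this with h' | h'
    · exact absurd h' (ne_of_gt hpm)
    · linarith
  · intro s'' hpp
    have hz : ∑ s'' : S, pp s a s'' * (1 - Mf lf pm pp π n θ s'') = 0 := by
      have hexp : ∑ s'' : S, pp s a s'' * (1 - Mf lf pm pp π n θ s'')
          = ∑ s'' : S, pp s a s'' - Sp a := by
        rw [hSpdef, ← Finset.sum_sub_distrib]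
        exact Finset.sum_congr rfl fun x _ => by ring
      rw [hexp, hpp1 s a, hSpeq]; ring
    have := (Finset.sum_eq_zero_iff_of_nonneg fun x _ =>
      mul_nonneg (hpp0 s a x) (by nlinarith [hM0 x, hM1 x])).mp hz s'' (Finset.mem_univ s'')
    rcases mul_eq_zero.mp this with h' | h'
    · exact absurd h' (ne_of_gt hpp)
    · linarith

lemma main_claim
    (hπpos : ∀ θ s a, 0 < π θ s a)
    (hπdiff : ∀ s a, Differentiable ℝ (fun θ => π θ s a))
    (hπsum : ∀ θ s, ∑ a : A, π θ s a = 1)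
    (hpm0 : ∀ s a s', 0 ≤ pm s a s') (hpm1 : ∀ s a, ∑ s' : S, pm s a s' = 1)
    (hpp0 : ∀ s a s', 0 ≤ pp s a s') (hpp1 : ∀ s a, ∑ s' : S, pp s a s' = 1)
    (θ₀ : ℝ) :
    ∀ (n : ℕ) (s : S), (∀ θ, Mf lf pm pp π n θ s = 1) →
      HasDerivAt (fun θ => Wf lf pm pp π r n θ s) (Gf lf pm pp π r n θ₀ s) θ₀ := by
  intro n
  induction n with
  | zero =>
    intro s hM
    have hlf : lf s = true := by
      by_contra hc
      have := hM θ₀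
      rw [Mf_zero, if_neg hc] at this
      norm_num at this
    have hW : (fun θ => Wf lf pm pp π r 0 θ s) = fun _ => r s := funext fun θ => by
      rw [Wf_zero, if_pos hlf, one_mul]
    rw [hW, Gf_zero]
    exact hasDerivAt_const _ _
  | succ n ih =>
    intro s hM
    by_cases hlf : lf s = true
    · have hW : (fun θ => Wf lf pm pp π r (n+1) θ s) = fun _ => r s := funext fun θ => by
        rw [Wf_succ, if_pos hlf, if_pos hlf]; ring
      have hG : Gf lf pm pp π r (n+1) θ₀ s = 0 := by
        rw [Gf_succ, if_pos hlf]; ring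
      rw [hW, hG]
      exact hasDerivAt_const _ _
    · have hch := fun θ => child_mass lf pm pp π θ (hπpos θ) (hπsum θ)
        hpm0 hpm1 hpp0 hpp1 n s hlf (hM θ)
      have hSm : ∀ θ a, (∑ s' : S, pm s a s' * Mf lf pm pp π n θ s') = 1 := fun θ a => by
        have hcong : ∀ s' ∈ (Finset.univ : Finset S),
            pm s a s' * Mf lf pm pp π n θ s' = pm s a s' := fun s' _ => by
          rcases (hpm0 s a s').lt_or_eq with hp | hp
          · rw [(hch θ a).1 s' hp, mul_one]
          · rw [← hp]; ring
        rw [Finset.sum_congr rfl hcong, hpm1]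
      have hSp : ∀ θ a, (∑ s'' : S, pp s a s'' * Mf lf pm pp π n θ s'') = 1 := fun θ a => by
        have hcong : ∀ s'' ∈ (Finset.univ : Finset S),
            pp s a s'' * Mf lf pm pp π n θ s'' = pp s a s'' := fun s'' _ => by
          rcases (hpp0 s a s'').lt_or_eq with hp | hp
          · rw [(hch θ a).2 s'' hp, mul_one]
          · rw [← hp]; ring
        rw [Finset.sum_congr rfl hcong, hpp1]
      have hW : (fun θ => Wf lf pm pp π r (n+1) θ s)
          = fun θ => ∑ a : A, π θ s a *
              (r s + (∑ s' : S, pm s a s' * Wf lf pm pp π r n θ s')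
                + (∑ s'' : S, pp s a s'' * Wf lf pm pp π r n θ s'')) := funext fun θ => by
        rw [Wf_succ, if_neg hlf, if_neg hlf, zero_mul, one_mul, zero_add]
        refine Finset.sum_congr rfl fun a _ => ?_
        rw [hSm θ a, hSp θ a]; ring
      have hTm : ∀ a, HasDerivAt (fun θ => ∑ s' : S, pm s a s' * Wf lf pm pp π r n θ s')
          (∑ s' : S, pm s a s' * Gf lf pm pp π r n θ₀ s') θ₀ := fun a =>
        HasDerivAt.fun_sum fun s' _ => by
          rcases (hpm0 s a s').lt_or_eq with hp | hp
          · exact (ih s' (fun θ => (hch θ a).1 s' hp)).const_mul _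
          · rw [← hp]
            simpa using hasDerivAt_const θ₀ (0:ℝ)
      have hTp : ∀ a, HasDerivAt (fun θ => ∑ s'' : S, pp s a s'' * Wf lf pm pp π r n θ s'')
          (∑ s'' : S, pp s a s'' * Gf lf pm pp π r n θ₀ s'') θ₀ := fun a =>
        HasDerivAt.fun_sum fun s'' _ => by
          rcases (hpp0 s a s'').lt_or_eq with hp | hp
          · exact (ih s'' (fun θ => (hch θ a).2 s'' hp)).const_mul _
          · rw [← hp]
            simpa using hasDerivAt_const θ₀ (0:ℝ)
      have hinner : ∀ a, HasDerivAt (fun θ => r s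
            + (∑ s' : S, pm s a s' * Wf lf pm pp π r n θ s')
            + (∑ s'' : S, pp s a s'' * Wf lf pm pp π r n θ s''))
          ((∑ s' : S, pm s a s' * Gf lf pm pp π r n θ₀ s')
            + (∑ s'' : S, pp s a s'' * Gf lf pm pp π r n θ₀ s'')) θ₀ := fun a => by
        have := ((hTm a).const_add (r s)).add (hTp a)
        exact this
      have hπa : ∀ a, HasDerivAt (fun θ => π θ s a)
          (deriv (fun θ => π θ s a) θ₀) θ₀ := fun a => (hπdiff s a θ₀).hasDerivAt
      have hall := HasDerivAt.fun_sum (fun a (_ : a ∈ (Finset.univ : Finset A)) =>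
        (hπa a).mul (hinner a))
      rw [hW]
      have hGeq : Gf lf pm pp π r (n+1) θ₀ s
          = ∑ a : A, (deriv (fun θ => π θ s a) θ₀ *
              (r s + (∑ s' : S, pm s a s' * Wf lf pm pp π r n θ₀ s')
                + (∑ s'' : S, pp s a s'' * Wf lf pm pp π r n θ₀ s''))
            + π θ₀ s a * ((∑ s' : S, pm s a s' * Gf lf pm pp π r n θ₀ s')
                + (∑ s'' : S, pp s a s'' * Gf lf pm pp π r n θ₀ s''))) := by
        rw [Gf_succ, if_neg hlf, one_mul]
        refine Finset.sum_congr rfl fun a _ => ?_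
        rw [hSm θ₀ a, hSp θ₀ a]
        have hlog : deriv (fun u => Real.log (π u s a)) θ₀
            = deriv (fun θ => π θ s a) θ₀ / π θ₀ s a :=
          (((hπdiff s a θ₀).hasDerivAt).log (ne_of_gt (hπpos θ₀ s a))).deriv
        rw [hlog]
        have hne := ne_of_gt (hπpos θ₀ s a)
        field_simp
        ring
      rw [hGeq]
      exact hall

end Aux

/-- Tree policy gradient theorem (finite case): for a finite tree MDP with
positive differentiable policy `π_θ` and trajectories of uniformly bounded
size, the derivative of the expected total reward
`V^θ = E_{τ∼p_θ}[∑_{i∈N} r(s_i)]` equals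
`E_{τ∼p_θ}[∑_{i∈N∖L} (d/dθ log π_θ(a_i|s_i)) ∑_{j∈d(i)} r(s_j)]`. -/
theorem stmt2 {S A : Type} [Fintype S] [Fintype A] [DecidableEq S] [DecidableEq A]
    (lf : S → Bool) (pinit : S → ℝ) (pm pp : S → A → S → ℝ)
    (π : ℝ → S → A → ℝ) (r : S → ℝ) (D : ℕ) (θ₀ : ℝ)
    (hπpos : ∀ θ s a, 0 < π θ s a)
    (hπdiff : ∀ s a, Differentiable ℝ (fun θ => π θ s a))
    (hπsum : ∀ θ s, ∑ a : A, π θ s a = 1)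
    (hpminit : ∀ s, 0 ≤ pinit s) (hpinit1 : ∑ s : S, pinit s = 1)
    (hpm0 : ∀ s a s', 0 ≤ pm s a s') (hpm1 : ∀ s a, ∑ s' : S, pm s a s' = 1)
    (hpp0 : ∀ s a s', 0 ≤ pp s a s') (hpp1 : ∀ s a, ∑ s' : S, pp s a s' = 1)
    -- uniformly bounded trajectories: from every state, the trajectories of
    -- depth at most `D` carry all the probability mass, for every `θ`
    (hmass : ∀ θ s, ∑ τ ∈ (treesUpTo S A D).filter (fun τ => BT.root τ = s),
        BT.prob lf (π θ) pm pp τ = 1) :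
    HasDerivAt
      (fun θ => ∑ τ ∈ treesUpTo S A D,
        pinit (BT.root τ) * BT.prob lf (π θ) pm pp τ * BT.reward r τ)
      (∑ τ ∈ treesUpTo S A D,
        pinit (BT.root τ) * BT.prob lf (π θ₀) pm pp τ * BT.gradTerm r π θ₀ τ)
      θ₀ := by
  have hWeq : (fun θ => ∑ τ ∈ treesUpTo S A D,
        pinit (BT.root τ) * BT.prob lf (π θ) pm pp τ * BT.reward r τ)
      = fun θ => ∑ s : S, pinit s * Wf lf pm pp π r D θ s := funext fun θ => by
    rw [show (∑ τ ∈ treesUpTo S A D,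
          pinit (BT.root τ) * BT.prob lf (π θ) pm pp τ * BT.reward r τ)
        = ∑ τ ∈ treesUpTo S A D, pinit (BT.root τ) *
            (BT.prob lf (π θ) pm pp τ * BT.reward r τ) from
      Finset.sum_congr rfl fun τ _ => by ring, sum_fiber_root]
    rfl
  have hGeq : (∑ τ ∈ treesUpTo S A D,
        pinit (BT.root τ) * BT.prob lf (π θ₀) pm pp τ * BT.gradTerm r π θ₀ τ)
      = ∑ s : S, pinit s * Gf lf pm pp π r D θ₀ s := by
    rw [show (∑ τ ∈ treesUpTo S A D,
          pinit (BT.root τ) * BT.prob lf (π θ₀) pm pp τ * BT.gradTerm r π θ₀ τ)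
        = ∑ τ ∈ treesUpTo S A D, pinit (BT.root τ) *
            (BT.prob lf (π θ₀) pm pp τ * BT.gradTerm r π θ₀ τ) from
      Finset.sum_congr rfl fun τ _ => by ring, sum_fiber_root]
    rfl
  rw [hWeq, hGeq]
  exact HasDerivAt.fun_sum fun s _ =>
    (main_claim lf pm pp π r hπpos hπdiff hπsum hpm0 hpm1 hpp0 hpp1 θ₀ D s
      (fun θ => show Mf lf pm pp π D θ s = 1 from hmass θ s)).const_mul (pinit s)
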